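/- arXiv:2404.08911 — 2 statements merged into one kernel-verified Lean document; each statement's English description precedes it below -/
import Mathlib

section
/- Let f be a nonzero pure meromorphic function of type q (a quadratic form in the variables), and define C_i^μ(f) = δ(x_{i+1}/x_i, μ)·f + δ(x_i/x_{i+1}, h)·s_i f, where δ(a,b) has type (log a)(log b). Then C_i^μ(f) has pure type (i.e., both summands have equal type) if and only if μ = ∂_i(q) - h, where ∂_i(q) = (q - s_i q)/(x_i - x_{i+1}). -/
/-- Purity lemma. Types (quadratic forms linear in the `x`-variables) are encoded by
their coefficient vectors `c : Fin m → P`, where `P` is the additive group of linear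
forms in `h` and the `μ`-variables. The summand `δ(x_{i+1}/x_i, μ)·f` has type
`c + (x_{i+1} - x_i)·μ`, i.e. coefficient vector `c + (Pi.single j μ - Pi.single i μ)`
(with `j = i+1`), and `δ(x_i/x_{i+1}, h)·s_i f` has type `s_i(c) + (x_i - x_{i+1})·h`,
i.e. coefficient vector `c ∘ swap i j + (Pi.single i h - Pi.single j h)`.
`C_i^μ(f)` is pure iff these agree, which happens iff `μ = ∂_i(type f) - h = c_i - c_j - h`. -/
theorem purity_iff {P : Type*} [AddCommGroup P] {m : ℕ} (c : Fin m → P)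
    (i j : Fin m) (hij : (i : ℕ) + 1 = (j : ℕ)) (μ h : P) :
    (c + (Pi.single j μ - Pi.single i μ) =
        (c ∘ Equiv.swap i j) + (Pi.single i h - Pi.single j h)) ↔
      μ = (c i - c j) - h := by
  have hne : i ≠ j := by
    intro hx; subst hx; omega
  constructor
  · intro H
    have := congrFun H i
    simp [Pi.single_apply, hne, hne.symm, Equiv.swap_apply_left] at this
    have hμ : μ = c i - c j - h := by
      have := this
      rw [show c i + -μ = c i - μ from by abel] at this
      rw [sub_eq_iff_eq_add] at this
      rw [this]; abel
    exact hμ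
  · intro H
    funext x
    by_cases hxi : x = i
    · subst hxi
      simp [Pi.single_apply, hne, hne.symm, Equiv.swap_apply_left, H]
      abel
    · by_cases hxj : x = j
      · subst hxj
        simp [Pi.single_apply, hne, hne.symm, Equiv.swap_apply_right, hxi, H]
        abel
      · simp [Pi.single_apply, hxi, hxj, Ne.symm hxi, Ne.symm hxj,
          Equiv.swap_apply_of_ne_of_ne hxi hxj]
end

section
/- With the hypotheses of the purity lemma, if f has type q and μ = ∂_i(q) - h, then the type of C_i^μ(f) equals s_i(q - ρ_m h) + ρ_m h, where ρ_m = -Σ_{i=1}^m i·x_i. That is, admissible elliptic Demazure operators act on types as the permutation of coordinates after shifting the origin to ρ_m h. -/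
/-- The coefficient vector of `ρ_m h`: the coefficient of `x_k` is `-(k+1)·h`. -/
def rhoH {P : Type*} [AddCommGroup P] {m : ℕ} (h : P) : Fin m → P :=
  fun k => (-(((k : ℕ) + 1) : ℤ)) • h

/-- If `f` has (pure) type with `x`-coefficient vector `c` and `μ = ∂_i(type f) - h`,
then `C_i^μ(f)` has type `s_i(type f - ρ_m h) + ρ_m h`: on coefficient vectors, the type
of `C_i^μ(f)`, namely `c ∘ swap i j + (Pi.single i h - Pi.single j h)` (with `j = i+1`),
equals `(c - ρ_m h) ∘ swap i j + ρ_m h`. -/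
theorem type_of_admissible_demazure {P : Type*} [AddCommGroup P] {m : ℕ}
    (c : Fin m → P) (i j : Fin m) (hij : (i : ℕ) + 1 = (j : ℕ)) (h : P) :
    (c ∘ Equiv.swap i j) + (Pi.single i h - Pi.single j h) =
      (fun k => (c - rhoH h : Fin m → P) (Equiv.swap i j k)) + rhoH h := by
  have hne : i ≠ j := by
    intro e; rw [e] at hij; omega
  funext k
  simp only [Pi.add_apply, Pi.sub_apply, Function.comp_apply]
  rcases eq_or_ne k i with rfl | hki
  · rw [Equiv.swap_apply_left, Pi.single_eq_same, Pi.single_eq_of_ne hne]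
    have : rhoH (m := m) h k - rhoH h j = h := by
      simp only [rhoH]
      rw [← hij, ← sub_smul]
      push_cast
      rw [show -(((k:ℕ):ℤ) + 1) - -(((k:ℕ):ℤ) + 1 + 1) = 1 by ring]
      simp
    rw [show c j - rhoH h j + rhoH h k = c j + (rhoH h k - rhoH h j) by abel, this]
    abel
  · rcases eq_or_ne k j with rfl | hkj
    · rw [Equiv.swap_apply_right, Pi.single_eq_of_ne hki, Pi.single_eq_same]
      have : rhoH (m := m) h k - rhoH h i = -h := by
        simp only [rhoH]
        rw [← hij, ← sub_smul]
        push_cast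
        rw [show -(((i:ℕ):ℤ) + 1 + 1) - -(((i:ℕ):ℤ) + 1) = -1 by ring]
        simp
      rw [show c i - rhoH h i + rhoH h k = c i + (rhoH h k - rhoH h i) by abel, this]
      abel
    · rw [Equiv.swap_apply_of_ne_of_ne hki hkj, Pi.single_eq_of_ne hki,
        Pi.single_eq_of_ne hkj]
      abel
end
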